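/- If κ is inaccessible and β < κ, then the Levy collapse Col(β⁺, <κ) has the κ-chain condition: every antichain has cardinality less than κ. -/

import Mathlib

open Cardinal

/-- The Levy collapse `Col(β⁺, <κ)`: partial functions `p : β⁺ × κ → κ` with
`|dom p| ≤ β` and `p (α, lam) < lam` for all `(α, lam) ∈ dom p`.  Here `β⁺` and `κ`
are represented by the canonical types of order type `(β⁺).ord` and `κ.ord`. -/
def LevyCond (β κ : Cardinal.{0}) : Type :=
  {p : ((Order.succ β).ord.ToType × κ.ord.ToType) →. κ.ord.ToType //
    #p.Dom ≤ β ∧ ∀ (x) (h : (p x).Dom), (p x).get h < x.2}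

/-- `p` extends `q` (i.e. `p ≤ q` in the Levy collapse, ordered by reverse inclusion). -/
def LevyExtends {β κ : Cardinal.{0}} (p q : LevyCond β κ) : Prop :=
  ∀ x, (q.1 x).Dom → p.1 x = q.1 x

/-- Two conditions are compatible if they have a common extension. -/
def LevyCompatible {β κ : Cardinal.{0}} (p q : LevyCond β κ) : Prop :=
  ∃ r : LevyCond β κ, LevyExtends r p ∧ LevyExtends r q

open Classical in
noncomputable def levyTrace {β κ : Cardinal.{0}} (p : LevyCond β κ) (b : κ.ord.ToType) :
    {x : (Order.succ β).ord.ToType × κ.ord.ToType // x.2 < b} → Option (Set.Iio b) :=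
  fun x => if h : (p.1 x.1).Dom then some ⟨(p.1 x.1).get h, (p.2.2 x.1 h).trans x.2⟩ else none

lemma levyTrace_agree {β κ : Cardinal.{0}} {p q : LevyCond β κ} {b : κ.ord.ToType}
    (h : levyTrace p b = levyTrace q b) {x} (hx : x.2 < b) : p.1 x = q.1 x := by
  have h' := congrFun h ⟨x, hx⟩
  simp only [levyTrace] at h'
  by_cases hp : (p.1 x).Dom <;> by_cases hq : (q.1 x).Dom
  · rw [dif_pos hp, dif_pos hq] at h'
    have h2 := congrArg Subtype.val (Option.some.inj h')
    exact Part.ext' (iff_of_true hp hq) fun _ _ => h2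
  · rw [dif_pos hp, dif_neg hq] at h'; exact absurd h' (by simp)
  · rw [dif_neg hp, dif_pos hq] at h'; exact absurd h' (by simp)
  · exact Part.ext' (iff_of_false hp hq) fun h1 _ => absurd h1 hp

lemma bdd_of_mk_lt {κ : Cardinal.{0}} (hκr : κ.IsRegular) {S : Set κ.ord.ToType}
    (hS : #S < κ) : ∃ b, ∀ x ∈ S, x < b := by
  haveI : IsWellOrder κ.ord.ToType (· < ·) := isWellOrder_lt
  have h2 : #S < ((Ordinal.type ((· < ·) : κ.ord.ToType → κ.ord.ToType → Prop))).cof := by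
    rwa [Ordinal.type_toType, hκr.cof_eq]
  exact not_isCofinal_iff.1 fun hc => absurd ((Order.cof_le hc).trans_lt
    (by rwa [Ordinal.cof_toType, hκr.cof_eq])) (lt_irrefl _)

lemma mk_traceType_lt {β κ : Cardinal.{0}} (hsl : κ.IsStrongLimit)
    (hθκ : Order.succ β < κ) (b : κ.ord.ToType) :
    #({x : (Order.succ β).ord.ToType × κ.ord.ToType // x.2 < b} → Option (Set.Iio b)) < κ := by
  have hκ0 : ℵ₀ ≤ κ := hsl.aleph0_le
  have hIb : #(Set.Iio b) < κ := mk_Iio_ord_toType b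
  set a : Cardinal := #(Set.Iio b) + 1 with ha_def
  have ha : a < κ := add_lt_of_lt hκ0 hIb (one_lt_aleph0.trans_le hκ0)
  have ha0 : a ≠ 0 := by
    have : (1 : Cardinal) ≤ a := le_add_self
    exact fun h => by simp [h] at this
  set e : Cardinal := Order.succ β * #(Set.Iio b) with he_def
  have he : e < κ := mul_lt_of_lt hκ0 hθκ hIb
  have hR : #{x : (Order.succ β).ord.ToType × κ.ord.ToType // x.2 < b} ≤ e := by
    have hinj : Function.Injective
        (fun x : {x : (Order.succ β).ord.ToType × κ.ord.ToType // x.2 < b} =>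
          ((x.1.1, ⟨x.1.2, x.2⟩) : (Order.succ β).ord.ToType × Set.Iio b)) := by
      rintro ⟨⟨x1, x2⟩, hx⟩ ⟨⟨y1, y2⟩, hy⟩ hxy
      simp only [Prod.mk.injEq, Subtype.mk.injEq] at hxy
      exact Subtype.ext (Prod.ext hxy.1 (congrArg Subtype.val hxy.2))
    refine (mk_le_of_injective hinj).trans ?_
    rw [he_def, ← mk_ord_toType (Order.succ β)]
    simp [mk_prod]
  calc #({x : (Order.succ β).ord.ToType × κ.ord.ToType // x.2 < b} → Option (Set.Iio b))
      = #(Option (Set.Iio b)) ^ #{x : (Order.succ β).ord.ToType × κ.ord.ToType // x.2 < b} :=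
        (power_def _ _).symm
    _ ≤ a ^ e := by rw [mk_option]; exact power_le_power_left ha0 hR
    _ ≤ (2 ^ a) ^ e := power_le_power_right (cantor a).le
    _ = 2 ^ (a * e) := (power_mul ..).symm
    _ < κ := hsl.two_power_lt (mul_lt_of_lt hκ0 ha he)

/-- if `κ` is inaccessible and `β < κ`, then the Levy collapse
`Col(β⁺, <κ)` has the `κ`-chain condition: every antichain has cardinality `< κ`. -/
theorem stmt11 (β κ : Cardinal.{0}) (hβ : β.IsRegular) (hκ : κ.IsInaccessible)
    (hβκ : β < κ) (A : Set (LevyCond β κ))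
    (hA : ∀ p ∈ A, ∀ q ∈ A, p ≠ q → ¬ LevyCompatible p q) : #A < κ := by

  classical
  by_contra hcon
  push_neg at hcon
  have hβ0 : ℵ₀ ≤ β := hβ.aleph0_le
  obtain ⟨hκℵ, hκreg, hκsl⟩ : ℵ₀ < κ ∧ κ.IsRegular ∧ κ.IsStrongLimit :=
    ⟨hκ.aleph0_lt, hκ.isRegular, hκ.isStrongLimit⟩
  have hκ0 : ℵ₀ ≤ κ := hκreg.aleph0_le
  have hθκ : Order.succ β < κ :=
    lt_of_le_of_lt (Order.succ_le_of_lt (cantor β)) (hκsl.two_power_lt hβκ)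
  have hle : #(κ.ord.ToType) ≤ #A := by rw [mk_ord_toType]; exact hcon
  obtain ⟨G⟩ := (Cardinal.le_def _ _).1 hle
  let P : κ.ord.ToType → LevyCond β κ := fun i => (G i).1
  have hPA : ∀ i, P i ∈ A := fun i => (G i).2
  have hPinj : Function.Injective P := fun i j h => G.injective (Subtype.ext h)
  let SC : κ.ord.ToType → Set κ.ord.ToType := fun i => Prod.snd '' (P i).1.Dom
  have hSC : ∀ i, #(SC i) ≤ β := fun i => mk_image_le.trans (P i).2.1
  have hneO : Nonempty κ.ord.ToType := by
    rw [← mk_ne_zero_iff, mk_ord_toType]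
    exact (aleph0_pos.trans hκℵ).ne'
  obtain ⟨o₀⟩ := hneO
  -- the minimum of `SC i` above a bound `b`
  have hMex : ∃ m : κ.ord.ToType → κ.ord.ToType → κ.ord.ToType,
      ∀ b i, ¬ SC i ⊆ Set.Iio b →
        (m b i ∈ SC i ∧ ¬ m b i < b ∧ ∀ y ∈ SC i, ¬ y < b → m b i ≤ y) := by
    have wf : WellFounded ((· < ·) : κ.ord.ToType → κ.ord.ToType → Prop) :=
      IsWellFounded.wf
    refine ⟨fun b i => if h : (SC i \ Set.Iio b).Nonempty then wf.min _ h else o₀, ?_⟩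
    intro b i hi
    have hne' : (SC i \ Set.Iio b).Nonempty := by
      obtain ⟨y, hy1, hy2⟩ := Set.not_subset.1 hi
      exact ⟨y, hy1, hy2⟩
    simp only [dif_pos hne']
    refine ⟨(wf.min_mem _ hne').1, fun hlt => (wf.min_mem _ hne').2 hlt, fun y hy hyb => ?_⟩
    exact le_of_not_gt (wf.not_lt_min (SC i \ Set.Iio b) ⟨hy, hyb⟩)
  obtain ⟨mval, hmval⟩ := hMex
  have hT : ∀ b, #({x : (Order.succ β).ord.ToType × κ.ord.ToType // x.2 < b}
      → Option (Set.Iio b)) < κ := fun b => mk_traceType_lt hκsl hθκ b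
  have hW : ∀ b : κ.ord.ToType, #{i : κ.ord.ToType | SC i ⊆ Set.Iio b} < κ := by
    intro b
    refine lt_of_le_of_lt (mk_le_of_injective
      (f := fun i : {i : κ.ord.ToType | SC i ⊆ Set.Iio b} => levyTrace (P i.1) b) ?_) (hT b)
    rintro ⟨i, hi⟩ ⟨j, hj⟩ hij
    have hij' : levyTrace (P i) b = levyTrace (P j) b := hij
    refine Subtype.ext (hPinj (Subtype.ext (funext fun x => ?_)))
    by_cases hx : x.2 < b
    · exact levyTrace_agree hij' hx
    · have hdi : ¬ ((P i).1 x).Dom := fun hd => hx (hi ⟨x, hd, rfl⟩)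
      have hdj : ¬ ((P j).1 x).Dom := fun hd => hx (hj ⟨x, hd, rfl⟩)
      exact Part.ext' (iff_of_false hdi hdj) fun h1 _ => absurd h1 hdi
  by_cases hU : ∃ b, ∀ c, ∃ i, ¬ SC i ⊆ Set.Iio b ∧ c ≤ mval b i
  · -- unbounded case: find two compatible conditions
    obtain ⟨b, hb⟩ := hU
    have claim : ∃ τ, ∀ c, ∃ i, ¬ SC i ⊆ Set.Iio b ∧ levyTrace (P i) b = τ ∧ c ≤ mval b i := by
      by_contra hcl
      push_neg at hcl
      choose cf hcf using hcl
      obtain ⟨cs, hcs⟩ := bdd_of_mk_lt hκreg (S := Set.range cf)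
        (mk_range_le.trans_lt (hT b))
      obtain ⟨i, hi1, hi2⟩ := hb cs
      have h3 := hcf (levyTrace (P i) b) i hi1 rfl
      exact absurd hi2 (not_le.2 (h3.trans (hcs _ ⟨_, rfl⟩)))
    obtain ⟨τ, hτ⟩ := claim
    obtain ⟨i, hi, hti, -⟩ := hτ o₀
    obtain ⟨c', hc'⟩ := bdd_of_mk_lt hκreg (S := SC i) ((hSC i).trans_lt hβκ)
    obtain ⟨j, hj, htj, hcj⟩ := hτ c'
    obtain ⟨hmi_mem, hmi_nlt, hmi_min⟩ := hmval b i hi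
    obtain ⟨hmj_mem, hmj_nlt, hmj_min⟩ := hmval b j hj
    have hij : i ≠ j := by
      intro h; subst h
      exact absurd hcj (not_le.2 (hc' _ hmi_mem))
    have htij : levyTrace (P i) b = levyTrace (P j) b := hti.trans htj.symm
    have hagr : ∀ x, ((P i).1 x).Dom → ((P j).1 x).Dom → (P i).1 x = (P j).1 x := by
      intro x hxi hxj
      have hx2 : x.2 < b := by
        by_contra hge
        have h1 : x.2 < mval b j := lt_of_lt_of_le (hc' _ ⟨x, hxi, rfl⟩) hcj
        exact absurd (hmj_min x.2 ⟨x, hxj, rfl⟩ hge) (not_le.2 h1)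
      exact levyTrace_agree htij hx2
    refine hA (P i) (hPA i) (P j) (hPA j) (fun h => hij (hPinj h))
      ⟨⟨fun x => if h : ((P i).1 x).Dom then (P i).1 x else (P j).1 x, ?_, ?_⟩, ?_, ?_⟩
    · refine le_trans (mk_le_mk_of_subset (?_ : _ ⊆ (P i).1.Dom ∪ (P j).1.Dom)) ?_
      · intro x hx
        by_cases hd : ((P i).1 x).Dom
        · exact Or.inl hd
        · right
          have hx' : (if h : ((P i).1 x).Dom then (P i).1 x else (P j).1 x).Dom := hx
          rwa [dif_neg hd] at hx'
      · exact (mk_union_le _ _).trans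
          (le_of_le_of_eq (add_le_add (P i).2.1 (P j).2.1) (Cardinal.add_eq_self hβ0))
    · intro x h
      by_cases hd : ((P i).1 x).Dom
      · simp only [dif_pos hd] at h ⊢
        exact (P i).2.2 x h
      · simp only [dif_neg hd] at h ⊢
        exact (P j).2.2 x h
    · intro x hx
      simp only [dif_pos hx]
    · intro x hx
      by_cases hd : ((P i).1 x).Dom
      · simp only [dif_pos hd]
        exact hagr x hd hx
      · simp only [dif_neg hd]
  · -- bounded case: iterate to get a condition with too large a domain
    push_neg at hU
    have hF' : ∀ b, ∃ c, b < c ∧ ∀ i, ¬ SC i ⊆ Set.Iio b → mval b i < c := by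
      intro b
      obtain ⟨c, hc⟩ := hU b
      obtain ⟨d, hd⟩ := bdd_of_mk_lt hκreg (S := {b, c})
        (((Set.finite_singleton c).insert b).lt_aleph0.trans_le hκ0)
      exact ⟨d, hd b (by simp), fun i hi => (hc i hi).trans (hd c (by simp))⟩
    choose F hF1 hF2 using hF'
    have wf1 : WellFounded ((· < ·) : (Order.succ β).ord.ToType
        → (Order.succ β).ord.ToType → Prop) := IsWellFounded.wf
    have hbddIH : ∀ (α : (Order.succ β).ord.ToType) (ih : ∀ γ, γ < α → κ.ord.ToType),
        ∃ b : κ.ord.ToType, ∀ γ (h : γ < α), F (ih γ h) < b := by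
      intro α ih
      obtain ⟨b, hb⟩ := bdd_of_mk_lt hκreg
        (S := Set.range fun γ : Set.Iio α => F (ih γ.1 γ.2))
        (mk_range_le.trans_lt ((mk_Iio_ord_toType α).trans hθκ))
      exact ⟨b, fun γ h => hb _ ⟨⟨γ, h⟩, rfl⟩⟩
    have hbsex : ∃ bs : (Order.succ β).ord.ToType → κ.ord.ToType,
        ∀ α γ, γ < α → F (bs γ) < bs α := by
      refine ⟨wf1.fix (fun α ih => (hbddIH α ih).choose), ?_⟩
      intro α γ h
      have heq := wf1.fix_eq (fun α ih => (hbddIH α ih).choose) α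
      rw [heq]
      exact (hbddIH α (fun γ _ => wf1.fix (fun α ih => (hbddIH α ih).choose) γ)).choose_spec γ h
    obtain ⟨bs, hbs⟩ := hbsex
    have hi₀ : ∃ i, ∀ α, ¬ SC i ⊆ Set.Iio (bs α) := by
      by_contra hno
      push_neg at hno
      have hcov : (Set.univ : Set κ.ord.ToType)
          ⊆ ⋃ α, {i | SC i ⊆ Set.Iio (bs α)} := by
        intro i _
        obtain ⟨α, hα⟩ := hno i
        exact Set.mem_iUnion.2 ⟨α, hα⟩
      have h1 : κ ≤ #(⋃ α, {i | SC i ⊆ Set.Iio (bs α)}) := by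
        calc κ = #(κ.ord.ToType) := (mk_ord_toType κ).symm
          _ = #(Set.univ : Set κ.ord.ToType) := mk_univ.symm
          _ ≤ _ := mk_le_mk_of_subset hcov
      have h2 : #(⋃ α, {i | SC i ⊆ Set.Iio (bs α)}) < κ := by
        refine lt_of_le_of_lt (mk_iUnion_le _) ?_
        have hι : #((Order.succ β).ord.ToType) < κ := by rw [mk_ord_toType]; exact hθκ
        exact mul_lt_of_lt hκ0 hι (iSup_lt_of_isRegular hκreg hι fun α => hW (bs α))
      exact absurd (h1.trans_lt h2) (lt_irrefl κ)
    obtain ⟨i₀, hi₀⟩ := hi₀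
    have hsm : ∀ γ α, γ < α → mval (bs γ) i₀ < mval (bs α) i₀ := by
      intro γ α h
      have h1 : mval (bs γ) i₀ < F (bs γ) := hF2 (bs γ) i₀ (hi₀ γ)
      have h2 : F (bs γ) < bs α := hbs α γ h
      have h3 : bs α ≤ mval (bs α) i₀ := le_of_not_gt (hmval (bs α) i₀ (hi₀ α)).2.1
      exact (h1.trans h2).trans_le h3
    have hinj : Function.Injective fun α : (Order.succ β).ord.ToType =>
        (⟨mval (bs α) i₀, (hmval (bs α) i₀ (hi₀ α)).1⟩ : SC i₀) := by
      intro a a' h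
      by_contra hne'
      rcases lt_or_gt_of_ne hne' with h' | h'
      · exact absurd (congrArg Subtype.val h) (ne_of_lt (hsm a a' h'))
      · exact absurd (congrArg Subtype.val h).symm (ne_of_lt (hsm a' a h'))
    have hcontra : Order.succ β ≤ β := by
      have h4 := mk_le_of_injective hinj
      rw [mk_ord_toType] at h4
      exact h4.trans (hSC i₀)
    exact absurd hcontra (not_le.2 (Order.lt_succ β))
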